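/- For real σ, ν with ν < 0, 0 < σ < 1/4, set η(σ,ν) = arcsin(e^{πν} sin 2πσ)/(2π) (principal branch) and assume 0 < η(σ,ν) < σ; set ρ(σ,ν) = (1/(4πi)) Log( sin(2πη)/sin(2π(σ+η)) ). Define W(σ,ν) by 8π² W(σ,ν) = Li₂(−e^{2πi(σ+η−iν/2)}) + Li₂(−e^{−2πi(σ+η+iν/2)}) − (2πη)² + (πν)², with principal branches of the dilogarithm. Then on this domain ∂W/∂σ = η and ∂W/∂ν = iρ, i.e. ρ = −i ∂W/∂ν; thus W is a generating function of the change of coordinates (σ,η) ↦ (ν,ρ). -/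

import Mathlib

/-- The classical dilogarithm `Li₂(z) = Σ_{n≥1} zⁿ/n²` (principal branch on the
unit disk; on the domain considered below all arguments lie in the open unit disk). -/
noncomputable def Li2 (z : ℂ) : ℂ := ∑' n : ℕ, z ^ (n + 1) / ((n : ℂ) + 1) ^ 2

/-- `η(σ,ν) = arcsin(e^{πν} sin 2πσ)/(2π)` (principal branch of arcsin). -/
noncomputable def etaFn (σ ν : ℝ) : ℝ :=
  Real.arcsin (Real.exp (Real.pi * ν) * Real.sin (2 * Real.pi * σ)) / (2 * Real.pi)

/-- `ρ(σ,ν) = (1/(4πi)) Log(sin 2πη / sin 2π(σ+η))` (principal branch of Log). -/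
noncomputable def rhoFn (σ ν : ℝ) : ℂ :=
  (1 / (4 * Real.pi * Complex.I)) *
    Complex.log ((Real.sin (2 * Real.pi * etaFn σ ν) : ℂ) /
      (Real.sin (2 * Real.pi * (σ + etaFn σ ν)) : ℂ))

/-- The generating function `W(σ,ν)`, defined by
`8π² W = Li₂(−e^{2πi(σ+η−iν/2)}) + Li₂(−e^{−2πi(σ+η+iν/2)}) − (2πη)² + (πν)²`. -/
noncomputable def Wgen (σ ν : ℝ) : ℂ :=
  (1 / (8 * (Real.pi : ℂ) ^ 2)) *
    (Li2 (-Complex.exp (2 * Real.pi * Complex.I *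
        ((σ : ℂ) + (etaFn σ ν : ℂ) - Complex.I * (ν : ℂ) / 2))) +
      Li2 (-Complex.exp (-(2 * Real.pi * Complex.I *
        ((σ : ℂ) + (etaFn σ ν : ℂ) + Complex.I * (ν : ℂ) / 2)))) -
      (2 * Real.pi * (etaFn σ ν : ℂ)) ^ 2 + (Real.pi * (ν : ℂ)) ^ 2)

lemma key_sin (x y : ℂ) : Complex.sin x + Complex.sin y * Complex.exp ((x + y) * Complex.I)
    = Complex.exp (y * Complex.I) * Complex.sin (x + y) := by
  simp only [Complex.sin, neg_mul, Complex.exp_neg, add_mul, Complex.exp_add]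
  have h1 := Complex.exp_ne_zero (x * Complex.I)
  have h2 := Complex.exp_ne_zero (y * Complex.I)
  field_simp
  ring

lemma Li2_hasDerivAt {z : ℂ} (hz : ‖z‖ < 1) :
    HasDerivAt Li2 (∑' n : ℕ, z ^ n / ((n : ℂ) + 1)) z := by
  set r : ℝ := (1 + ‖z‖) / 2 with hr
  have h0 : 0 ≤ ‖z‖ := norm_nonneg z
  have hr0 : 0 < r := by positivity
  have hr1 : r < 1 := by rw [hr]; linarith
  have hzr : ‖z‖ < r := by rw [hr]; linarith
  have H := hasDerivAt_tsum_of_isPreconnected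
    (g := fun (n : ℕ) (y : ℂ) => y ^ (n + 1) / ((n : ℂ) + 1) ^ 2)
    (g' := fun (n : ℕ) (y : ℂ) => y ^ n / ((n : ℂ) + 1)) (u := fun n : ℕ => r ^ n)
    (summable_geometric_of_lt_one hr0.le hr1) (Metric.isOpen_ball (x := (0:ℂ)) (ε := r))
    ((convex_ball (0:ℂ) r).isPreconnected) (fun n y _ => ?_) (fun n y hy => ?_)
    (Metric.mem_ball_self hr0) ?_ (mem_ball_zero_iff.2 hzr)
  · exact H
  · have hne : ((n : ℂ) + 1) ≠ 0 := Nat.cast_add_one_ne_zero n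
    have := (hasDerivAt_pow (n + 1) y).div_const (((n : ℂ) + 1) ^ 2)
    convert this using 1
    · rfl
    push_cast
    field_simp
  · rw [mem_ball_zero_iff] at hy
    rw [norm_div, norm_pow]
    have hn1 : (1:ℝ) ≤ ‖((n : ℂ) + 1)‖ := by
      rw [show ((n : ℂ) + 1) = ((n + 1 : ℕ) : ℂ) by push_cast; ring, Complex.norm_natCast]
      exact_mod_cast Nat.succ_le_succ (Nat.zero_le n)
    calc ‖y‖ ^ n / ‖(n : ℂ) + 1‖ ≤ ‖y‖ ^ n := div_le_self (by positivity) hn1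
      _ ≤ r ^ n := pow_le_pow_left₀ (norm_nonneg y) hy.le n
  · apply summable_zero.congr
    intro n
    simp [zero_pow (Nat.succ_ne_zero n)]

lemma mul_tsum_eq {z : ℂ} (hz : ‖z‖ < 1) :
    z * ∑' n : ℕ, z ^ n / ((n : ℂ) + 1) = -Complex.log (1 - z) := by
  have h := Complex.hasSum_taylorSeries_neg_log hz
  have h2 : HasSum (fun n : ℕ => z ^ (n + 1) / ((n : ℕ) + 1 : ℂ)) (-Complex.log (1 - z)) := by
    have h' := (hasSum_nat_add_iff' (f := fun n : ℕ => z ^ n / (n : ℂ)) 1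
      (g := -Complex.log (1 - z))).2 h
    simpa using h'
  have h3 : HasSum (fun n : ℕ => z * (z ^ n / ((n : ℂ) + 1))) (-Complex.log (1 - z)) := by
    refine h2.congr_fun fun n => ?_
    ring
  rw [← tsum_mul_left]
  exact h3.tsum_eq

set_option maxHeartbeats 1000000 in
/-- On the domain `ν < 0`, `0 < σ < 1/4`, `0 < η(σ,ν) < σ`, the function `W` is a
generating function of the change of coordinates `(σ,η) ↦ (ν,ρ)`:
`∂W/∂σ = η` and `∂W/∂ν = iρ`, i.e. `ρ = −i ∂W/∂ν`. -/
theorem Wgen_partial_derivatives (σ ν : ℝ)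
    (hν : ν < 0) (hσ0 : 0 < σ) (hσ : σ < 1 / 4)
    (hη0 : 0 < etaFn σ ν) (hησ : etaFn σ ν < σ) :
    HasDerivAt (fun s : ℝ => Wgen s ν) ((etaFn σ ν : ℂ)) σ ∧
    HasDerivAt (fun n : ℝ => Wgen σ n) (Complex.I * rhoFn σ ν) ν := by
  have hπ : (0:ℝ) < Real.pi := Real.pi_pos
  have hπC : ((Real.pi : ℂ)) ≠ 0 := Complex.ofReal_ne_zero.mpr Real.pi_ne_zero
  set η := etaFn σ ν with hηdef
  have hη14 : η < 1/4 := hησ.trans hσ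
  have hsinσ : 0 < Real.sin (2 * Real.pi * σ) :=
    Real.sin_pos_of_pos_of_lt_pi (by positivity) (by nlinarith)
  have hsinσ1 : Real.sin (2 * Real.pi * σ) ≤ 1 := Real.sin_le_one _
  have hexp0 : 0 < Real.exp (Real.pi * ν) := Real.exp_pos _
  have hexp1 : Real.exp (Real.pi * ν) < 1 :=
    Real.exp_lt_one_iff.mpr (by nlinarith)
  have hu0 : 0 < Real.exp (Real.pi * ν) * Real.sin (2 * Real.pi * σ) := by positivity
  have hu1 : Real.exp (Real.pi * ν) * Real.sin (2 * Real.pi * σ) < 1 := by nlinarith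
  have hsin_eta : Real.sin (2 * Real.pi * η)
      = Real.exp (Real.pi * ν) * Real.sin (2 * Real.pi * σ) := by
    have h2 : 2 * Real.pi * η
        = Real.arcsin (Real.exp (Real.pi * ν) * Real.sin (2 * Real.pi * σ)) := by
      rw [hηdef, etaFn]; field_simp
    rw [h2, Real.sin_arcsin (by linarith) hu1.le]
  have hsinsum : 0 < Real.sin (2 * Real.pi * (σ + η)) :=
    Real.sin_pos_of_pos_of_lt_pi (by positivity) (by nlinarith)
  set r : ℝ := Real.sin (2 * Real.pi * (σ + η)) / Real.sin (2 * Real.pi * σ) with hrdef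
  have hr0 : 0 < r := div_pos hsinsum hsinσ
  have hsC : ((Real.sin (2 * Real.pi * σ) : ℝ) : ℂ) ≠ 0 := by
    exact_mod_cast hsinσ.ne'
  set z1 : ℂ := -Complex.exp (2 * Real.pi * Complex.I *
      ((σ : ℂ) + (η : ℂ) - Complex.I * (ν : ℂ) / 2)) with hz1def
  set z2 : ℂ := -Complex.exp (-(2 * Real.pi * Complex.I *
      ((σ : ℂ) + (η : ℂ) + Complex.I * (ν : ℂ) / 2))) with hz2def
  have hz1eq : z1 = -(((Real.exp (Real.pi * ν) : ℝ) : ℂ) *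
      Complex.exp (2 * (Real.pi : ℂ) * Complex.I * ((σ : ℂ) + (η : ℂ)))) := by
    rw [hz1def, show (2 * (Real.pi:ℂ) * Complex.I * ((σ:ℂ) + (η:ℂ) - Complex.I * (ν:ℂ) / 2))
        = ((Real.pi * ν : ℝ) : ℂ) + 2 * (Real.pi:ℂ) * Complex.I * ((σ:ℂ) + (η:ℂ)) from by
      push_cast
      linear_combination (-(Real.pi:ℂ) * (ν:ℂ)) * Complex.I_sq]
    rw [Complex.exp_add, Complex.ofReal_exp]
  have hz2eq : z2 = -(((Real.exp (Real.pi * ν) : ℝ) : ℂ) *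
      Complex.exp (-(2 * (Real.pi : ℂ) * Complex.I * ((σ : ℂ) + (η : ℂ))))) := by
    rw [hz2def, show (-(2 * (Real.pi:ℂ) * Complex.I * ((σ:ℂ) + (η:ℂ) + Complex.I * (ν:ℂ) / 2)))
        = ((Real.pi * ν : ℝ) : ℂ) + -(2 * (Real.pi:ℂ) * Complex.I * ((σ:ℂ) + (η:ℂ))) from by
      push_cast
      linear_combination (-(Real.pi:ℂ) * (ν:ℂ)) * Complex.I_sq]
    rw [Complex.exp_add, Complex.ofReal_exp]
  have hnz1 : ‖z1‖ = Real.exp (Real.pi * ν) := by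
    rw [hz1eq, norm_neg, norm_mul]
    rw [show (2 * (Real.pi:ℂ) * Complex.I * ((σ:ℂ) + (η:ℂ)))
        = ((2 * Real.pi * (σ + η) : ℝ) : ℂ) * Complex.I from by push_cast; ring]
    rw [Complex.norm_exp_ofReal_mul_I,
      Complex.norm_of_nonneg hexp0.le, mul_one]
  have hnz2 : ‖z2‖ = Real.exp (Real.pi * ν) := by
    rw [hz2eq, norm_neg, norm_mul]
    rw [show (-(2 * (Real.pi:ℂ) * Complex.I * ((σ:ℂ) + (η:ℂ))))
        = ((-(2 * Real.pi * (σ + η)) : ℝ) : ℂ) * Complex.I from by push_cast; ring]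
    rw [Complex.norm_exp_ofReal_mul_I,
      Complex.norm_of_nonneg hexp0.le, mul_one]
  have hz1n : ‖z1‖ < 1 := by rw [hnz1]; exact hexp1
  have hz2n : ‖z2‖ < 1 := by rw [hnz2]; exact hexp1
  -- the key exponential formula for 1 - z1
  have h1z1 : (1:ℂ) - z1 = Complex.exp (((Real.log r : ℝ) : ℂ)
      + 2 * (Real.pi:ℂ) * (η:ℂ) * Complex.I) := by
    have e1 : ((Real.sin (2 * Real.pi * σ) : ℝ) : ℂ) * (1 - z1)
        = Complex.exp (((2 * Real.pi * η : ℝ) : ℂ) * Complex.I)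
          * ((Real.sin (2 * Real.pi * (σ + η)) : ℝ) : ℂ) := by
      have hk := key_sin ((2 * Real.pi * σ : ℝ) : ℂ) ((2 * Real.pi * η : ℝ) : ℂ)
      rw [show (((2 * Real.pi * σ : ℝ) : ℂ) + ((2 * Real.pi * η : ℝ) : ℂ)) * Complex.I
          = 2 * (Real.pi:ℂ) * Complex.I * ((σ:ℂ) + (η:ℂ)) from by push_cast; ring] at hk
      rw [show (((2 * Real.pi * σ : ℝ) : ℂ) + ((2 * Real.pi * η : ℝ) : ℂ))
          = ((2 * Real.pi * (σ + η) : ℝ) : ℂ) from by push_cast; ring] at hk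
      rw [← Complex.ofReal_sin, ← Complex.ofReal_sin, ← Complex.ofReal_sin] at hk
      rw [hz1eq]
      have hse : ((Real.sin (2 * Real.pi * η) : ℝ) : ℂ)
          = ((Real.exp (Real.pi * ν) : ℝ) : ℂ) * ((Real.sin (2 * Real.pi * σ) : ℝ) : ℂ) := by
        exact_mod_cast congrArg (fun t : ℝ => (t : ℂ)) hsin_eta
      linear_combination hk
        - Complex.exp (2 * (Real.pi:ℂ) * Complex.I * ((σ:ℂ) + (η:ℂ))) * hse
    have e2 : (1:ℂ) - z1 = Complex.exp (((2 * Real.pi * η : ℝ) : ℂ) * Complex.I) * (r : ℂ) := by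
      have hrs0 : r * Real.sin (2 * Real.pi * σ) = Real.sin (2 * Real.pi * (σ + η)) := by
        rw [hrdef]; exact div_mul_cancel₀ _ hsinσ.ne'
      have hrs : ((r : ℝ) : ℂ) * ((Real.sin (2 * Real.pi * σ) : ℝ) : ℂ)
          = ((Real.sin (2 * Real.pi * (σ + η)) : ℝ) : ℂ) := by
        exact_mod_cast congrArg (fun t : ℝ => (t : ℂ)) hrs0
      apply (mul_right_inj' hsC).mp
      rw [e1]
      linear_combination (-Complex.exp (((2 * Real.pi * η : ℝ) : ℂ) * Complex.I)) * hrs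
    rw [e2, show ((r : ℝ) : ℂ) = Complex.exp (((Real.log r : ℝ) : ℂ)) from by
      rw [← Complex.ofReal_exp, Real.exp_log hr0], ← Complex.exp_add]
    congr 1
    push_cast
    ring
  have hconj : z2 = (starRingEnd ℂ) z1 := by
    rw [hz1eq, hz2eq, map_neg, map_mul, Complex.conj_ofReal, ← Complex.exp_conj]
    congr 2
    simp only [map_mul, map_add, Complex.conj_I, Complex.conj_ofReal, map_ofNat]
    ring
  have h1z2 : (1:ℂ) - z2 = Complex.exp (((Real.log r : ℝ) : ℂ)
      - 2 * (Real.pi:ℂ) * (η:ℂ) * Complex.I) := by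
    have : (1:ℂ) - z2 = (starRingEnd ℂ) (1 - z1) := by
      rw [map_sub, map_one, ← hconj]
    rw [this, h1z1, ← Complex.exp_conj]
    congr 1
    simp only [map_add, map_mul, Complex.conj_ofReal, Complex.conj_I, map_ofNat]
    ring
  have hlog1 : Complex.log (1 - z1) = ((Real.log r : ℝ) : ℂ)
      + 2 * (Real.pi:ℂ) * (η:ℂ) * Complex.I := by
    rw [h1z1]
    apply Complex.log_exp
    · simp only [Complex.add_im, Complex.ofReal_im, Complex.mul_im, Complex.mul_re,
        Complex.I_re, Complex.I_im]
      simp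
      nlinarith
    · simp only [Complex.add_im, Complex.ofReal_im, Complex.mul_im, Complex.mul_re,
        Complex.I_re, Complex.I_im]
      simp
      nlinarith
  have hlog2 : Complex.log (1 - z2) = ((Real.log r : ℝ) : ℂ)
      - 2 * (Real.pi:ℂ) * (η:ℂ) * Complex.I := by
    rw [h1z2]
    apply Complex.log_exp
    · simp
      nlinarith
    · simp
      nlinarith
  set S1 : ℂ := ∑' n : ℕ, z1 ^ n / ((n : ℂ) + 1) with hS1def
  set S2 : ℂ := ∑' n : ℕ, z2 ^ n / ((n : ℂ) + 1) with hS2def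
  have hS1 : z1 * S1 = -Complex.log (1 - z1) := mul_tsum_eq hz1n
  have hS2 : z2 * S2 = -Complex.log (1 - z2) := mul_tsum_eq hz2n
  have hLi2z1 : HasDerivAt Li2 S1 z1 := Li2_hasDerivAt hz1n
  have hLi2z2 : HasDerivAt Li2 S2 z2 := Li2_hasDerivAt hz2n
  have hune1 : Real.exp (Real.pi * ν) * Real.sin (2 * Real.pi * σ) ≠ -1 :=
    (by linarith : (-1:ℝ) < _).ne'
  constructor
  · -- σ-direction
    obtain ⟨c, hc⟩ : ∃ c, HasDerivAt (fun s : ℝ => etaFn s ν) c σ := by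
      have h1 : HasDerivAt (fun s : ℝ => 2 * Real.pi * s) (2 * Real.pi) σ := by
        simpa using (hasDerivAt_id σ).const_mul (2 * Real.pi)
      have hin : HasDerivAt (fun s : ℝ => Real.exp (Real.pi * ν) * Real.sin (2 * Real.pi * s))
          (Real.exp (Real.pi * ν) * (Real.cos (2 * Real.pi * σ) * (2 * Real.pi))) σ :=
        (h1.sin).const_mul _
      have harc := (Real.hasDerivAt_arcsin hune1 hu1.ne).comp σ hin
      exact ⟨_, harc.div_const (2 * Real.pi)⟩
    have hcC : HasDerivAt (fun s : ℝ => ((etaFn s ν : ℝ) : ℂ)) ((c : ℝ) : ℂ) σ := hc.ofReal_comp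
    have hidC : HasDerivAt (fun s : ℝ => (s : ℂ)) (((1:ℝ)) : ℂ) σ :=
      (hasDerivAt_id σ).ofReal_comp
    have hE1 : HasDerivAt (fun s : ℝ => 2 * (Real.pi:ℂ) * Complex.I *
        ((s : ℂ) + ((etaFn s ν : ℝ) : ℂ) - Complex.I * (ν : ℂ) / 2))
        (2 * (Real.pi:ℂ) * Complex.I * (1 + (c : ℂ))) σ := by
      have := ((hidC.add hcC).sub_const (Complex.I * (ν : ℂ) / 2)).const_mul
        (2 * (Real.pi:ℂ) * Complex.I)
      simpa using this
    have hE2 : HasDerivAt (fun s : ℝ => -(2 * (Real.pi:ℂ) * Complex.I *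
        ((s : ℂ) + ((etaFn s ν : ℝ) : ℂ) + Complex.I * (ν : ℂ) / 2)))
        (-(2 * (Real.pi:ℂ) * Complex.I * (1 + (c : ℂ)))) σ := by
      have := (((hidC.add hcC).add_const (Complex.I * (ν : ℂ) / 2)).const_mul
        (2 * (Real.pi:ℂ) * Complex.I)).neg
      simp at this
      exact this
    have hz1d : HasDerivAt (fun s : ℝ => -Complex.exp (2 * (Real.pi:ℂ) * Complex.I *
        ((s : ℂ) + ((etaFn s ν : ℝ) : ℂ) - Complex.I * (ν : ℂ) / 2)))
        (z1 * (2 * (Real.pi:ℂ) * Complex.I * (1 + (c : ℂ)))) σ := by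
      have := (hE1.cexp).neg
      rw [hz1def]
      convert this using 1
      · rfl
      · rfl
      ring
    have hz2d : HasDerivAt (fun s : ℝ => -Complex.exp (-(2 * (Real.pi:ℂ) * Complex.I *
        ((s : ℂ) + ((etaFn s ν : ℝ) : ℂ) + Complex.I * (ν : ℂ) / 2))))
        (z2 * (-(2 * (Real.pi:ℂ) * Complex.I * (1 + (c : ℂ))))) σ := by
      have := (hE2.cexp).neg
      rw [hz2def]
      convert this using 1
      · rfl
      · rfl
      ring
    have hcomp1 : HasDerivAt (fun s : ℝ => Li2 (-Complex.exp (2 * (Real.pi:ℂ) * Complex.I *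
        ((s : ℂ) + ((etaFn s ν : ℝ) : ℂ) - Complex.I * (ν : ℂ) / 2))))
        (-Complex.log (1 - z1) * (2 * (Real.pi:ℂ) * Complex.I * (1 + (c : ℂ)))) σ := by
      have h := (hLi2z1.hasFDerivAt.restrictScalars ℝ).comp_hasDerivAt σ hz1d
      have h' : HasDerivAt (fun s : ℝ => Li2 (-Complex.exp (2 * (Real.pi:ℂ) * Complex.I *
          ((s : ℂ) + ((etaFn s ν : ℝ) : ℂ) - Complex.I * (ν : ℂ) / 2))))
          (z1 * (2 * (Real.pi:ℂ) * Complex.I * (1 + (c : ℂ))) * S1) σ := by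
        simpa [Function.comp_def] using h
      convert h' using 1
      rw [← hS1]; ring
    have hcomp2 : HasDerivAt (fun s : ℝ => Li2 (-Complex.exp (-(2 * (Real.pi:ℂ) * Complex.I *
        ((s : ℂ) + ((etaFn s ν : ℝ) : ℂ) + Complex.I * (ν : ℂ) / 2)))))
        (Complex.log (1 - z2) * (2 * (Real.pi:ℂ) * Complex.I * (1 + (c : ℂ)))) σ := by
      have h := (hLi2z2.hasFDerivAt.restrictScalars ℝ).comp_hasDerivAt σ hz2d
      have h' : HasDerivAt (fun s : ℝ => Li2 (-Complex.exp (-(2 * (Real.pi:ℂ) * Complex.I *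
          ((s : ℂ) + ((etaFn s ν : ℝ) : ℂ) + Complex.I * (ν : ℂ) / 2)))))
          (-(z2 * (2 * (Real.pi:ℂ) * Complex.I * (1 + (c : ℂ))) * S2)) σ := by
        simpa [Function.comp_def] using h
      convert h' using 1
      linear_combination (2 * (Real.pi:ℂ) * Complex.I * (1 + (c : ℂ))) * hS2
    have hT3 : HasDerivAt (fun s : ℝ => (2 * (Real.pi:ℂ) * ((etaFn s ν : ℝ) : ℂ)) ^ 2)
        (2 * (Real.pi:ℂ) * (c : ℂ) * (2 * (Real.pi:ℂ) * (η : ℂ))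
          + 2 * (Real.pi:ℂ) * (η : ℂ) * (2 * (Real.pi:ℂ) * (c : ℂ))) σ := by
      have hg := hcC.const_mul (2 * (Real.pi:ℂ))
      have := hg.mul hg
      simp only [← pow_two] at this
      exact this
    have hass := ((((hcomp1.add hcomp2).sub hT3).add_const
        (((Real.pi : ℂ) * (ν : ℂ)) ^ 2)).const_mul (1 / (8 * (Real.pi : ℂ) ^ 2)))
    simp only [Wgen]
    convert hass using 1
    · rfl
    · rfl
    rw [hlog1, hlog2]
    have h8 : (8:ℂ) * (Real.pi : ℂ) ^ 2 ≠ 0 := by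
      simp [hπC]
    field_simp
    linear_combination (8 * (Real.pi:ℂ) * (η:ℂ) * (1 + (c:ℂ))) * Complex.I_sq
  · -- ν-direction
    obtain ⟨d, hd⟩ : ∃ d, HasDerivAt (fun n : ℝ => etaFn σ n) d ν := by
      have h1 : HasDerivAt (fun n : ℝ => Real.pi * n) Real.pi ν := by
        simpa using (hasDerivAt_id ν).const_mul Real.pi
      have hin : HasDerivAt (fun n : ℝ => Real.exp (Real.pi * n) * Real.sin (2 * Real.pi * σ))
          (Real.exp (Real.pi * ν) * Real.pi * Real.sin (2 * Real.pi * σ)) ν := by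
        simpa using (h1.exp).mul_const (Real.sin (2 * Real.pi * σ))
      have harc := (Real.hasDerivAt_arcsin hune1 hu1.ne).comp ν hin
      exact ⟨_, harc.div_const (2 * Real.pi)⟩
    have hdC : HasDerivAt (fun n : ℝ => ((etaFn σ n : ℝ) : ℂ)) ((d : ℝ) : ℂ) ν := hd.ofReal_comp
    have hidC : HasDerivAt (fun n : ℝ => (n : ℂ)) (((1:ℝ)) : ℂ) ν :=
      (hasDerivAt_id ν).ofReal_comp
    have hE1 : HasDerivAt (fun n : ℝ => 2 * (Real.pi:ℂ) * Complex.I *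
        ((σ : ℂ) + ((etaFn σ n : ℝ) : ℂ) - Complex.I * (n : ℂ) / 2))
        (2 * (Real.pi:ℂ) * Complex.I * ((d : ℂ) - Complex.I / 2)) ν := by
      have := ((((hasDerivAt_const ν ((σ:ℝ):ℂ)).add hdC).sub
        ((hidC.const_mul Complex.I).div_const 2)).const_mul (2 * (Real.pi:ℂ) * Complex.I))
      simpa using this
    have hE2 : HasDerivAt (fun n : ℝ => -(2 * (Real.pi:ℂ) * Complex.I *
        ((σ : ℂ) + ((etaFn σ n : ℝ) : ℂ) + Complex.I * (n : ℂ) / 2)))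
        (-(2 * (Real.pi:ℂ) * Complex.I * ((d : ℂ) + Complex.I / 2))) ν := by
      have := (((((hasDerivAt_const ν ((σ:ℝ):ℂ)).add hdC).add
        ((hidC.const_mul Complex.I).div_const 2)).const_mul (2 * (Real.pi:ℂ) * Complex.I)).neg)
      simp at this
      exact this
    have hz1d : HasDerivAt (fun n : ℝ => -Complex.exp (2 * (Real.pi:ℂ) * Complex.I *
        ((σ : ℂ) + ((etaFn σ n : ℝ) : ℂ) - Complex.I * (n : ℂ) / 2)))
        (z1 * (2 * (Real.pi:ℂ) * Complex.I * ((d : ℂ) - Complex.I / 2))) ν := by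
      have := (hE1.cexp).neg
      rw [hz1def]
      convert this using 1
      · rfl
      · rfl
      ring
    have hz2d : HasDerivAt (fun n : ℝ => -Complex.exp (-(2 * (Real.pi:ℂ) * Complex.I *
        ((σ : ℂ) + ((etaFn σ n : ℝ) : ℂ) + Complex.I * (n : ℂ) / 2))))
        (z2 * (-(2 * (Real.pi:ℂ) * Complex.I * ((d : ℂ) + Complex.I / 2)))) ν := by
      have := (hE2.cexp).neg
      rw [hz2def]
      convert this using 1
      · rfl
      · rfl
      ring
    have hcomp1 : HasDerivAt (fun n : ℝ => Li2 (-Complex.exp (2 * (Real.pi:ℂ) * Complex.I *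
        ((σ : ℂ) + ((etaFn σ n : ℝ) : ℂ) - Complex.I * (n : ℂ) / 2))))
        (-Complex.log (1 - z1) * (2 * (Real.pi:ℂ) * Complex.I * ((d : ℂ) - Complex.I / 2))) ν := by
      have h := (hLi2z1.hasFDerivAt.restrictScalars ℝ).comp_hasDerivAt ν hz1d
      have h' : HasDerivAt (fun n : ℝ => Li2 (-Complex.exp (2 * (Real.pi:ℂ) * Complex.I *
          ((σ : ℂ) + ((etaFn σ n : ℝ) : ℂ) - Complex.I * (n : ℂ) / 2))))
          (z1 * (2 * (Real.pi:ℂ) * Complex.I * ((d : ℂ) - Complex.I / 2)) * S1) ν := by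
        simpa [Function.comp_def] using h
      convert h' using 1
      rw [← hS1]; ring
    have hcomp2 : HasDerivAt (fun n : ℝ => Li2 (-Complex.exp (-(2 * (Real.pi:ℂ) * Complex.I *
        ((σ : ℂ) + ((etaFn σ n : ℝ) : ℂ) + Complex.I * (n : ℂ) / 2)))))
        (Complex.log (1 - z2) * (2 * (Real.pi:ℂ) * Complex.I * ((d : ℂ) + Complex.I / 2))) ν := by
      have h := (hLi2z2.hasFDerivAt.restrictScalars ℝ).comp_hasDerivAt ν hz2d
      have h' : HasDerivAt (fun n : ℝ => Li2 (-Complex.exp (-(2 * (Real.pi:ℂ) * Complex.I *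
          ((σ : ℂ) + ((etaFn σ n : ℝ) : ℂ) + Complex.I * (n : ℂ) / 2)))))
          (-(z2 * (2 * (Real.pi:ℂ) * Complex.I * ((d : ℂ) + Complex.I / 2)) * S2)) ν := by
        simpa [Function.comp_def] using h
      convert h' using 1
      linear_combination (2 * (Real.pi:ℂ) * Complex.I * ((d : ℂ) + Complex.I / 2)) * hS2
    have hT3 : HasDerivAt (fun n : ℝ => (2 * (Real.pi:ℂ) * ((etaFn σ n : ℝ) : ℂ)) ^ 2)
        (2 * (Real.pi:ℂ) * (d : ℂ) * (2 * (Real.pi:ℂ) * (η : ℂ))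
          + 2 * (Real.pi:ℂ) * (η : ℂ) * (2 * (Real.pi:ℂ) * (d : ℂ))) ν := by
      have hg := hdC.const_mul (2 * (Real.pi:ℂ))
      have := hg.mul hg
      simp only [← pow_two] at this
      exact this
    have hT4 : HasDerivAt (fun n : ℝ => ((Real.pi:ℂ) * ((n : ℝ) : ℂ)) ^ 2)
        ((Real.pi:ℂ) * 1 * ((Real.pi:ℂ) * (ν : ℂ))
          + (Real.pi:ℂ) * (ν : ℂ) * ((Real.pi:ℂ) * 1)) ν := by
      have hg := hidC.const_mul ((Real.pi:ℂ))
      have := hg.mul hg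
      simp only [← pow_two] at this
      exact this
    have hass := ((((hcomp1.add hcomp2).sub hT3).add hT4).const_mul
      (1 / (8 * (Real.pi : ℂ) ^ 2)))
    simp only [Wgen]
    convert hass using 1
    · rfl
    · rfl
    rw [hlog1, hlog2]
    simp only [rhoFn, ← hηdef]
    have hdiv : ((Real.sin (2 * Real.pi * η) : ℝ) : ℂ) /
        ((Real.sin (2 * Real.pi * (σ + η)) : ℝ) : ℂ)
        = (((Real.exp (Real.pi * ν) / r) : ℝ) : ℂ) := by
      rw [hsin_eta, hrdef]
      push_cast
      field_simp
    have hlogdiv : Complex.log (((Real.sin (2 * Real.pi * η) : ℝ) : ℂ) /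
        ((Real.sin (2 * Real.pi * (σ + η)) : ℝ) : ℂ))
        = ((Real.pi * ν - Real.log r : ℝ) : ℂ) := by
      rw [hdiv, ← Complex.ofReal_log (by positivity)]
      rw [Real.log_div (Real.exp_ne_zero _) hr0.ne', Real.log_exp]
    rw [hlogdiv]
    push_cast
    field_simp
    linear_combination (32 * (Real.pi:ℂ) * (η:ℂ) * (d:ℂ)
      - 8 * ((Real.log r : ℝ) : ℂ)) * Complex.I_sq
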